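/- Let E be an AL-space and let S = (S_t)_{t∈(0,∞)} be a bounded semigroup of positive operators on E. If the fixed space of the dual semigroup S* is {0}, then S_t x → 0 in norm as t → ∞ for every x ∈ E. -/

import Mathlib

open Filter Topology

/-- Iterated averaging of a function along a list of step sizes. -/
noncomputable def Zavg : List ℝ → ℕ → (ℝ → ℝ) → ℝ
  | [], _, f => f 0
  | r :: L, n, f => (∑ k ∈ Finset.range n, Zavg L n (fun τ => f (τ + (k : ℝ) * r))) / n

theorem Zavg_congr (L : List ℝ) (hL : ∀ a ∈ L, 0 ≤ a) (n : ℕ) {f g : ℝ → ℝ}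
    (h : ∀ τ, 0 ≤ τ → f τ = g τ) : Zavg L n f = Zavg L n g := by
  induction L generalizing f g with
  | nil => exact h 0 le_rfl
  | cons r L ih =>
    have hr : 0 ≤ r := hL r List.mem_cons_self
    have hL' : ∀ a ∈ L, 0 ≤ a := fun a ha => hL a (List.mem_cons_of_mem r ha)
    simp only [Zavg]
    congr 1
    refine Finset.sum_congr rfl fun k _ => ?_
    exact ih hL' fun τ hτ => h (τ + (k : ℝ) * r)
      (add_nonneg hτ (mul_nonneg (Nat.cast_nonneg k) hr))

theorem Zavg_abs_le (L : List ℝ) (hL : ∀ a ∈ L, 0 ≤ a) (n : ℕ) (hn : 0 < n) {f : ℝ → ℝ}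
    {M : ℝ} (h : ∀ τ, 0 ≤ τ → |f τ| ≤ M) : |Zavg L n f| ≤ M := by
  induction L generalizing f with
  | nil => exact h 0 le_rfl
  | cons r L ih =>
    have hr : 0 ≤ r := hL r List.mem_cons_self
    have hL' : ∀ a ∈ L, 0 ≤ a := fun a ha => hL a (List.mem_cons_of_mem r ha)
    have hn' : (0 : ℝ) < n := Nat.cast_pos.mpr hn
    simp only [Zavg, abs_div, Nat.abs_cast]
    rw [div_le_iff₀ hn']
    calc |∑ k ∈ Finset.range n, Zavg L n fun τ => f (τ + (k : ℝ) * r)|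
        ≤ ∑ k ∈ Finset.range n, |Zavg L n fun τ => f (τ + (k : ℝ) * r)| :=
          Finset.abs_sum_le_sum_abs _ _
      _ ≤ ∑ _k ∈ Finset.range n, M := by
          refine Finset.sum_le_sum fun k _ => ?_
          exact ih hL' fun τ hτ => h (τ + (k : ℝ) * r)
            (add_nonneg hτ (mul_nonneg (Nat.cast_nonneg k) hr))
      _ = M * n := by simp [mul_comm]
  
theorem le_Zavg (L : List ℝ) (hL : ∀ a ∈ L, 0 ≤ a) (n : ℕ) (hn : 0 < n) {f : ℝ → ℝ}
    {δ : ℝ} (h : ∀ τ, 0 ≤ τ → δ ≤ f τ) : δ ≤ Zavg L n f := by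
  induction L generalizing f with
  | nil => exact h 0 le_rfl
  | cons r L ih =>
    have hr : 0 ≤ r := hL r List.mem_cons_self
    have hL' : ∀ a ∈ L, 0 ≤ a := fun a ha => hL a (List.mem_cons_of_mem r ha)
    have hn' : (0 : ℝ) < n := Nat.cast_pos.mpr hn
    simp only [Zavg]
    rw [le_div_iff₀ hn']
    calc δ * n = ∑ _k ∈ Finset.range n, δ := by simp [mul_comm]
      _ ≤ ∑ k ∈ Finset.range n, Zavg L n fun τ => f (τ + (k : ℝ) * r) := by
          refine Finset.sum_le_sum fun k _ => ?_
          exact ih hL' fun τ hτ => h (τ + (k : ℝ) * r)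
            (add_nonneg hτ (mul_nonneg (Nat.cast_nonneg k) hr))

theorem Zavg_add (L : List ℝ) (n : ℕ) (f g : ℝ → ℝ) :
    Zavg L n (fun τ => f τ + g τ) = Zavg L n f + Zavg L n g := by
  induction L generalizing f g with
  | nil => simp [Zavg]
  | cons r L ih =>
    simp only [Zavg]
    rw [← add_div, ← Finset.sum_add_distrib]
    congr 1
    exact Finset.sum_congr rfl fun k _ => ih _ _

theorem Zavg_smul (L : List ℝ) (n : ℕ) (c : ℝ) (f : ℝ → ℝ) :
    Zavg L n (fun τ => c * f τ) = c * Zavg L n f := by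
  induction L generalizing f with
  | nil => simp [Zavg]
  | cons r L ih =>
    simp only [Zavg]
    have hsum : (∑ k ∈ Finset.range n, Zavg L n fun τ => c * f (τ + (k : ℝ) * r))
        = ∑ k ∈ Finset.range n, c * Zavg L n (fun τ => f (τ + (k : ℝ) * r)) :=
      Finset.sum_congr rfl fun k _ => ih _
    rw [hsum, ← Finset.mul_sum, mul_div_assoc]

theorem Zavg_shift (L : List ℝ) (hL : ∀ a ∈ L, 0 ≤ a) (n : ℕ) (hn : 0 < n) {f : ℝ → ℝ}
    {M : ℝ} (hf : ∀ τ, 0 ≤ τ → |f τ| ≤ M) {r : ℝ} (hr : r ∈ L) :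
    |Zavg L n (fun τ => f (τ + r)) - Zavg L n f| ≤ 2 * M / n := by
  induction L generalizing f with
  | nil => simp at hr
  | cons s L ih =>
    have hs : 0 ≤ s := hL s List.mem_cons_self
    have hL' : ∀ a ∈ L, 0 ≤ a := fun a ha => hL a (List.mem_cons_of_mem s ha)
    have hn' : (0 : ℝ) < n := Nat.cast_pos.mpr hn
    rcases List.mem_cons.mp hr with h1 | h1
    · subst h1
      simp only [Zavg]
      set a : ℕ → ℝ := fun k => Zavg L n (fun τ => f (τ + (k : ℝ) * r)) with ha
      have e1 : ∀ k : ℕ, Zavg L n (fun τ => f (τ + (k : ℝ) * r + r)) = a (k + 1) := by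
        intro k
        refine Zavg_congr L hL' n fun τ _ => ?_
        congr 1
        push_cast
        ring
      have e2 : (∑ k ∈ Finset.range n, Zavg L n fun τ => f (τ + (k : ℝ) * r + r))
          = ∑ k ∈ Finset.range n, a (k + 1) := Finset.sum_congr rfl fun k _ => e1 k
      rw [e2, div_sub_div_same, ← Finset.sum_sub_distrib, Finset.sum_range_sub a]
      have hb : ∀ k : ℕ, |a k| ≤ M := by
        intro k
        refine Zavg_abs_le L hL' n hn fun τ hτ => ?_
        exact hf _ (add_nonneg hτ (mul_nonneg (Nat.cast_nonneg k) hs))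
      rw [abs_div, Nat.abs_cast]
      have h2M : |a n - a 0| ≤ 2 * M := by
        calc |a n - a 0| ≤ |a n| + |a 0| := abs_sub _ _
          _ ≤ 2 * M := by have := hb n; have := hb 0; linarith
      gcongr
    · simp only [Zavg]
      rw [div_sub_div_same, ← Finset.sum_sub_distrib]
      have hk : ∀ k ∈ Finset.range n,
          |Zavg L n (fun τ => f (τ + (k : ℝ) * s + r)) - Zavg L n (fun τ => f (τ + (k : ℝ) * s))|
            ≤ 2 * M / n := by
        intro k _
        have hsk : (0:ℝ) ≤ (k : ℝ) * s := mul_nonneg (Nat.cast_nonneg k) hs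
        have h2 := ih hL' (f := fun τ => f (τ + (k : ℝ) * s))
          (fun τ hτ => hf _ (add_nonneg hτ hsk)) h1
        have e3 : Zavg L n (fun τ => f (τ + (k : ℝ) * s + r))
            = Zavg L n (fun τ => f (τ + r + (k : ℝ) * s)) := by
          refine Zavg_congr L hL' n fun τ _ => ?_
          congr 1
          ring
        rw [e3]
        exact h2
      rw [abs_div, Nat.abs_cast]
      have hsum : |∑ k ∈ Finset.range n,
          ((Zavg L n fun τ => f (τ + (k : ℝ) * s + r)) - Zavg L n fun τ => f (τ + (k : ℝ) * s))|
            ≤ 2 * M := by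
        calc |∑ k ∈ Finset.range n,
            ((Zavg L n fun τ => f (τ + (k : ℝ) * s + r)) - Zavg L n fun τ => f (τ + (k : ℝ) * s))|
            ≤ ∑ k ∈ Finset.range n,
              |(Zavg L n fun τ => f (τ + (k : ℝ) * s + r)) - Zavg L n fun τ => f (τ + (k : ℝ) * s)| :=
              Finset.abs_sum_le_sum_abs _ _
          _ ≤ ∑ _k ∈ Finset.range n, 2 * M / n := Finset.sum_le_sum hk
          _ = 2 * M / n * n := by simp [mul_comm]
          _ = 2 * M := div_mul_cancel₀ _ hn'.ne'
      gcongr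

theorem ultra_lim {α : Type*} (U : Ultrafilter α) (g : α → ℝ) (M : ℝ) (h : ∀ i, |g i| ≤ M) :
    ∃ l : ℝ, Tendsto g U (𝓝 l) ∧ |l| ≤ M := by
  have hmem : (↑(U.map g) : Filter ℝ) ≤ Filter.principal (Set.Icc (-M) M) := by
    rw [Ultrafilter.coe_map, Filter.le_principal_iff, Filter.mem_map]
    exact Filter.univ_mem' fun i => by
      have := abs_le.mp (h i); exact ⟨this.1, this.2⟩
  obtain ⟨a, haI, ha⟩ := (isCompact_Icc (a := -M) (b := M)).ultrafilter_le_nhds (U.map g) hmem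
  refine ⟨a, ?_, abs_le.mpr ⟨haI.1, haI.2⟩⟩
  rwa [Ultrafilter.coe_map] at ha

theorem exists_al_functional {E : Type*} [NormedAddCommGroup E] [Lattice E] [HasSolidNorm E] [IsOrderedAddMonoid E] [NormedSpace ℝ E]
    (hAL : ∀ x y : E, 0 ≤ x → 0 ≤ y → ‖x + y‖ = ‖x‖ + ‖y‖) :
    ∃ e : E →L[ℝ] ℝ, (∀ y : E, 0 ≤ y → e y = ‖y‖) ∧ (∀ y : E, |e y| ≤ ‖y‖) := by
  have hadd : ∀ x y : E, ‖(x + y)⁺‖ - ‖(x + y)⁻‖ = (‖x⁺‖ - ‖x⁻‖) + (‖y⁺‖ - ‖y⁻‖) := by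
    intro x y
    have key : (x + y)⁺ + (x⁻ + y⁻) = (x + y)⁻ + (x⁺ + y⁺) := by
      have h0 : (x + y)⁺ + (x⁻ + y⁻) - ((x + y)⁻ + (x⁺ + y⁺))
          = ((x + y)⁺ - (x + y)⁻) - ((x⁺ - x⁻) + (y⁺ - y⁻)) := by abel
      rw [posPart_sub_negPart, posPart_sub_negPart, posPart_sub_negPart] at h0
      have h1 : (x + y)⁺ + (x⁻ + y⁻) - ((x + y)⁻ + (x⁺ + y⁺)) = 0 := by rw [h0]; abel
      exact sub_eq_zero.mp h1
    have h1 : ‖(x + y)⁺ + (x⁻ + y⁻)‖ = ‖(x + y)⁺‖ + (‖x⁻‖ + ‖y⁻‖) := by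
      rw [hAL _ _ (posPart_nonneg _) (add_nonneg (negPart_nonneg _) (negPart_nonneg _)),
        hAL _ _ (negPart_nonneg _) (negPart_nonneg _)]
    have h2 : ‖(x + y)⁻ + (x⁺ + y⁺)‖ = ‖(x + y)⁻‖ + (‖x⁺‖ + ‖y⁺‖) := by
      rw [hAL _ _ (negPart_nonneg _) (add_nonneg (posPart_nonneg _) (posPart_nonneg _)),
        hAL _ _ (posPart_nonneg _) (posPart_nonneg _)]
    rw [key, h2] at h1
    linarith
  let f : E →+ ℝ := AddMonoidHom.mk' (fun y => ‖y⁺‖ - ‖y⁻‖) hadd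
  have hcont : Continuous fun y : E => ‖y⁺‖ - ‖y⁻‖ := by fun_prop
  have hcoe : ∀ y : E, f.toRealLinearMap hcont y = ‖y⁺‖ - ‖y⁻‖ := fun y =>
    congrFun (AddMonoidHom.coe_toRealLinearMap f hcont) y
  refine ⟨f.toRealLinearMap hcont, ?_, ?_⟩
  · intro y hy
    rw [hcoe y, posPart_of_nonneg hy]
    have h2 : y⁻ = 0 := by simp [hy]
    rw [h2]
    simp
  · intro y
    rw [hcoe y]
    have h1 : ‖y⁺‖ ≤ ‖y‖ := by
      apply norm_le_norm_of_abs_le_abs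
      rw [abs_of_nonneg (posPart_nonneg y)]
      exact sup_le (le_abs_self y) (abs_nonneg y)
    have h2 : ‖y⁻‖ ≤ ‖y‖ := by
      apply norm_le_norm_of_abs_le_abs
      rw [abs_of_nonneg (negPart_nonneg y)]
      exact sup_le (neg_le_abs y) (abs_nonneg y)
    have h3 := norm_nonneg (y⁺)
    have h4 := norm_nonneg (y⁻)
    rw [abs_le]
    constructor <;> linarith

theorem aux_invariant_functional {E : Type*} [NormedAddCommGroup E] [Lattice E] [HasSolidNorm E] [IsOrderedAddMonoid E] [NormedSpace ℝ E]
    (S : ℝ → E →L[ℝ] E)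
    (hsg : ∀ s t : ℝ, 0 < s → 0 < t → S (s + t) = (S s).comp (S t))
    (hpos : ∀ t : ℝ, 0 < t → ∀ x : E, 0 ≤ x → 0 ≤ S t x)
    (C : ℝ) (hC1 : 1 ≤ C) (hSb : ∀ t : ℝ, 0 < t → ∀ y : E, ‖S t y‖ ≤ C * ‖y‖)
    (e : E →L[ℝ] ℝ) (he1 : ∀ y : E, 0 ≤ y → e y = ‖y‖) (he2 : ∀ y : E, |e y| ≤ ‖y‖)
    (x : E) (hx : 0 ≤ x) (hxn : 0 < ‖x‖) (δ : ℝ) (hδ : 0 < δ)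
    (hlow : ∀ t : ℝ, 0 < t → δ ≤ ‖S t x‖) :
    ∃ φ : E →L[ℝ] ℝ, (∀ t : ℝ, 0 < t → ∀ y : E, φ (S t y) = φ y) ∧ φ x ≠ 0 := by
  classical
  set δ₀ : ℝ := min δ ‖x‖ with hδ₀def
  have hδ₀ : 0 < δ₀ := lt_min hδ hxn
  set Sh : ℝ → E →L[ℝ] E := fun t => if 0 < t then S t else ContinuousLinearMap.id ℝ E with hSh
  have hC0 : (0 : ℝ) < C := lt_of_lt_of_le one_pos hC1
  have hShb : ∀ τ : ℝ, ∀ y : E, ‖Sh τ y‖ ≤ C * ‖y‖ := by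
    intro τ y
    by_cases h : 0 < τ
    · simp only [hSh, if_pos h]; exact hSb τ h y
    · simp only [hSh, if_neg h, ContinuousLinearMap.id_apply]
      nlinarith [norm_nonneg y]
  set ψ : ℝ → E → ℝ := fun τ y => e (Sh τ y) with hψ
  have hψb : ∀ τ : ℝ, ∀ y : E, |ψ τ y| ≤ C * ‖y‖ := fun τ y => (he2 _).trans (hShb τ y)
  have hψshift : ∀ τ : ℝ, 0 ≤ τ → ∀ r : ℝ, 0 < r → ∀ y : E, ψ τ (S r y) = ψ (τ + r) y := by
    intro τ hτ r hr y
    by_cases h : 0 < τ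
    · simp only [hψ, hSh, if_pos h, if_pos (by linarith : (0:ℝ) < τ + r)]
      rw [hsg τ r h hr]
      rfl
    · have hτ0 : τ = 0 := le_antisymm (not_lt.mp h) hτ
      subst hτ0
      simp only [hψ, hSh, if_neg h, if_pos hr, zero_add, ContinuousLinearMap.id_apply]
  have hψlow : ∀ τ : ℝ, 0 ≤ τ → δ₀ ≤ ψ τ x := by
    intro τ hτ
    by_cases h : 0 < τ
    · simp only [hψ, hSh, if_pos h]
      rw [he1 _ (hpos τ h x hx)]
      exact (min_le_left _ _).trans (hlow τ h)
    · simp only [hψ, hSh, if_neg h, ContinuousLinearMap.id_apply]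
      rw [he1 x hx]
      exact min_le_right _ _
  -- the averaging net
  let P := {r : ℝ // 0 < r}
  let I := Finset P × ℕ
  let Ll : I → List ℝ := fun i => (i.1.val.map Subtype.val).toList
  have hLl : ∀ i : I, ∀ a ∈ Ll i, 0 ≤ a := by
    intro i a ha
    rw [Multiset.mem_toList, Multiset.mem_map] at ha
    obtain ⟨r, _, rfl⟩ := ha
    exact le_of_lt r.2
  have hmem : ∀ (i : I) (r : P), r ∈ i.1 → (r : ℝ) ∈ Ll i := by
    intro i r hr
    rw [Multiset.mem_toList, Multiset.mem_map]
    exact ⟨r, hr, rfl⟩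
  let z : I → E → ℝ := fun i y => Zavg (Ll i) (i.2 + 1) (fun τ => ψ τ y)
  have hnpos : ∀ i : I, 0 < i.2 + 1 := fun i => Nat.succ_pos _
  have hzb : ∀ (i : I) (y : E), |z i y| ≤ C * ‖y‖ := fun i y =>
    Zavg_abs_le _ (hLl i) _ (hnpos i) fun τ _ => hψb τ y
  let U : Ultrafilter I := Ultrafilter.of atTop
  have hU : (U : Filter I) ≤ atTop := Ultrafilter.of_le _
  have hlim : ∀ y : E, ∃ l : ℝ, Tendsto (fun i => z i y) U (𝓝 l) ∧ |l| ≤ C * ‖y‖ :=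
    fun y => ultra_lim U _ _ fun i => hzb i y
  choose φ₀ hφt hφb using hlim
  have hadd : ∀ y y' : E, φ₀ (y + y') = φ₀ y + φ₀ y' := by
    intro y y'
    have h1 : ∀ i : I, z i (y + y') = z i y + z i y' := by
      intro i
      have hfun : (fun τ => ψ τ (y + y')) = fun τ => ψ τ y + ψ τ y' := by
        funext τ
        simp [hψ, map_add]
      show Zavg (Ll i) (i.2 + 1) (fun τ => ψ τ (y + y')) = _
      rw [hfun, Zavg_add]
    have h2 : Tendsto (fun i => z i (y + y')) U (𝓝 (φ₀ y + φ₀ y')) :=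
      ((hφt y).add (hφt y')).congr fun i => (h1 i).symm
    exact tendsto_nhds_unique (hφt (y + y')) h2
  have hsmul : ∀ (c : ℝ) (y : E), φ₀ (c • y) = c * φ₀ y := by
    intro c y
    have h1 : ∀ i : I, z i (c • y) = c * z i y := by
      intro i
      have hfun : (fun τ => ψ τ (c • y)) = fun τ => c * ψ τ y := by
        funext τ
        simp [hψ, map_smul]
      show Zavg (Ll i) (i.2 + 1) (fun τ => ψ τ (c • y)) = _
      rw [hfun, Zavg_smul]
    have h2 : Tendsto (fun i => z i (c • y)) U (𝓝 (c * φ₀ y)) :=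
      ((hφt y).const_mul c).congr fun i => (h1 i).symm
    exact tendsto_nhds_unique (hφt (c • y)) h2
  let φL : E →ₗ[ℝ] ℝ :=
    { toFun := φ₀, map_add' := hadd, map_smul' := fun c y => by simp [hsmul c y] }
  let φ : E →L[ℝ] ℝ := φL.mkContinuous C fun y => by
    rw [Real.norm_eq_abs]; exact hφb y
  have hφap : ∀ y : E, φ y = φ₀ y := fun y => rfl
  refine ⟨φ, ?_, ?_⟩
  · intro r hr y
    rw [hφap, hφap]
    refine tendsto_nhds_unique (hφt (S r y)) ?_
    have hdiff : Tendsto (fun i : I => z i (S r y) - z i y) U (𝓝 0) := by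
      have hg : Tendsto (fun i : I => 2 * (C * ‖y‖) / ((i.2 : ℝ) + 1)) U (𝓝 0) := by
        refine Tendsto.mono_left ?_ hU
        have h4 : Tendsto (fun i : I => i.2) atTop atTop := by
          rw [← Filter.prod_atTop_atTop_eq]
          exact tendsto_snd
        have h5 : Tendsto (fun n : ℕ => 2 * (C * ‖y‖) / ((n : ℝ) + 1)) atTop (𝓝 0) := by
          apply Tendsto.div_atTop (tendsto_const_nhds)
          exact tendsto_atTop_add_const_right _ _ tendsto_natCast_atTop_atTop
        exact h5.comp h4
      refine squeeze_zero_norm' ?_ hg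
      · have hev : ∀ᶠ i : I in atTop, (⟨r, hr⟩ : P) ∈ i.1 := by
          filter_upwards [eventually_ge_atTop (({⟨r, hr⟩} : Finset P), 0)] with i hi
          exact hi.1 (Finset.mem_singleton_self _)
        filter_upwards [hU hev] with i hi
        have h3 : z i (S r y) = Zavg (Ll i) (i.2 + 1) (fun τ => ψ (τ + r) y) := by
          refine Zavg_congr (Ll i) (hLl i) _ fun τ hτ => ?_
          exact hψshift τ hτ r hr y
        rw [Real.norm_eq_abs, h3]
        have h4 := Zavg_shift (Ll i) (hLl i) (i.2 + 1) (hnpos i)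
          (f := fun τ => ψ τ y) (M := C * ‖y‖) (fun τ _ => hψb τ y)
          (hmem i ⟨r, hr⟩ hi)
        have hcast : ((i.2 + 1 : ℕ) : ℝ) = (i.2 : ℝ) + 1 := by push_cast; ring
        calc |Zavg (Ll i) (i.2 + 1) (fun τ => ψ (τ + r) y) - z i y|
            ≤ 2 * (C * ‖y‖) / ((i.2 + 1 : ℕ) : ℝ) := h4
          _ = 2 * (C * ‖y‖) / ((i.2 : ℝ) + 1) := by rw [hcast]
    have h6 := hdiff.add (hφt y)
    rw [zero_add] at h6
    exact h6.congr fun i => by ring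
  · rw [hφap]
    have h7 : δ₀ ≤ φ₀ x :=
      ge_of_tendsto (hφt x) (Filter.Eventually.of_forall fun i =>
        le_Zavg _ (hLl i) _ (hnpos i) fun τ hτ => hψlow τ hτ)
    exact (lt_of_lt_of_le hδ₀ h7).ne'

/-- Let `E` be an AL-space and `S = (S t)_{t ∈ (0,∞)}` a bounded semigroup of positive
operators on `E`. If the fixed space of the dual semigroup `S*` is trivial, then
`S t x → 0` in norm as `t → ∞` for every `x ∈ E`. -/
theorem al_space_semigroup_tendsto_zero_of_trivial_dual_fixed_space
    {E : Type*} [NormedAddCommGroup E] [Lattice E] [HasSolidNorm E] [IsOrderedAddMonoid E] [NormedSpace ℝ E] [CompleteSpace E]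
    (hAL : ∀ x y : E, 0 ≤ x → 0 ≤ y → ‖x + y‖ = ‖x‖ + ‖y‖)
    (S : ℝ → E →L[ℝ] E)
    (hsg : ∀ s t : ℝ, 0 < s → 0 < t → S (s + t) = (S s).comp (S t))
    (hbdd : ∃ C : ℝ, ∀ t : ℝ, 0 < t → ‖S t‖ ≤ C)
    (hpos : ∀ t : ℝ, 0 < t → ∀ x : E, 0 ≤ x → 0 ≤ S t x)
    -- the fixed space of the dual semigroup is `{0}`:
    (hfix : ∀ φ : StrongDual ℝ E, (∀ t : ℝ, 0 < t → ∀ x : E, φ (S t x) = φ x) → φ = 0) :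
    ∀ x : E, Tendsto (fun t : ℝ => S t x) atTop (𝓝 (0 : E)) := by
  obtain ⟨C₀, hC₀⟩ := hbdd
  set C : ℝ := max C₀ 1 with hCdef
  have hC1 : (1 : ℝ) ≤ C := le_max_right _ _
  have hC0 : (0 : ℝ) < C := lt_of_lt_of_le one_pos hC1
  have hSb : ∀ t : ℝ, 0 < t → ∀ y : E, ‖S t y‖ ≤ C * ‖y‖ := by
    intro t ht y
    refine (ContinuousLinearMap.le_opNorm _ y).trans ?_
    exact mul_le_mul_of_nonneg_right ((hC₀ t ht).trans (le_max_left _ _)) (norm_nonneg y)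
  obtain ⟨e, he1, he2⟩ := exists_al_functional hAL
  suffices hp : ∀ y : E, 0 ≤ y → Tendsto (fun t : ℝ => S t y) atTop (𝓝 0) by
    intro x
    have h1 := (hp (x⁺) (posPart_nonneg x)).sub (hp (x⁻) (negPart_nonneg x))
    rw [sub_zero] at h1
    refine h1.congr fun t => ?_
    rw [← map_sub, posPart_sub_negPart]
  intro y hy
  have hsmall : ∀ ε : ℝ, 0 < ε → ∃ t : ℝ, 0 < t ∧ ‖S t y‖ < ε := by
    by_contra hcon
    push_neg at hcon
    obtain ⟨ε, hε, hlow⟩ := hcon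
    by_cases hy0 : y = 0
    · have := hlow 1 one_pos
      rw [hy0] at this
      simp at this
      linarith
    · have hyn : 0 < ‖y‖ := norm_pos_iff.mpr hy0
      obtain ⟨φ, hinv, hne⟩ := aux_invariant_functional S hsg hpos C hC1 hSb e he1 he2
        y hy hyn ε hε hlow
      exact hne (by rw [hfix φ hinv]; rfl)
  rw [NormedAddCommGroup.tendsto_nhds_zero]
  intro ε hε
  obtain ⟨t₀, ht₀, hst₀⟩ := hsmall (ε / C) (by positivity)
  filter_upwards [eventually_ge_atTop (t₀ + 1)] with t ht
  have htt : 0 < t - t₀ := by linarith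
  have hcomp : S t y = S (t - t₀) (S t₀ y) := by
    have h := hsg (t - t₀) t₀ htt ht₀
    rw [sub_add_cancel] at h
    rw [h]
    rfl
  rw [hcomp]
  calc ‖S (t - t₀) (S t₀ y)‖ ≤ C * ‖S t₀ y‖ := hSb _ htt _
    _ < C * (ε / C) := by exact mul_lt_mul_of_pos_left hst₀ hC0
    _ = ε := by field_simp
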